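/- (Tsirelson's inequality) Let A₁, A₂, B₁, B₂ be Hermitian operators on a finite-dimensional Hilbert space with A_i² = I and B_j² = I, where each A_i commutes with each B_j. Then for any unit vector |ψ⟩, ⟨ψ|A₁B₁ + A₂B₁ + A₂B₂ − A₁B₂|ψ⟩ ≤ 2√2. -/

import Mathlib

open Matrix Complex TsirelsonInequality Real

/-- The sum-of-squares identity underlying Tsirelson's inequality, in any `ℝ`-algebra. -/
lemma tsirelson_sos {R : Type*} [Ring R] [Algebra ℝ R]
    (A₀ A₁ B₀ B₁ : R)
    (A₀_inv : A₀ * A₀ = 1) (A₁_inv : A₁ * A₁ = 1)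
    (B₀_inv : B₀ * B₀ = 1) (B₁_inv : B₁ * B₁ = 1)
    (h₀₀ : A₀ * B₀ = B₀ * A₀) (h₀₁ : A₀ * B₁ = B₁ * A₀)
    (h₁₀ : A₁ * B₀ = B₀ * A₁) (h₁₁ : A₁ * B₁ = B₁ * A₁) :
    (√2 ^ 3 : ℝ) • (1 : R) - A₀ * B₀ - A₀ * B₁ - A₁ * B₀ + A₁ * B₁ =
      ((√2)⁻¹ : ℝ) • ((((√2)⁻¹ : ℝ) • (A₁ + A₀) - B₀) ^ 2 +
        (((√2)⁻¹ : ℝ) • (A₁ - A₀) + B₁) ^ 2) := by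
  have M : ∀ (m : ℤ) (a : ℝ) (x : R), m • a • x = ((m : ℝ) * a) • x := fun m a x => by
    rw [← Int.cast_smul_eq_zsmul ℝ, ← mul_smul]
  simp only [sq, sub_mul, mul_sub, add_mul, mul_add, smul_add, smul_sub]
  simp only [Algebra.mul_smul_comm, Algebra.smul_mul_assoc, ← mul_smul, sqrt_two_inv_mul_self]
  simp only [A₀_inv, A₁_inv, B₀_inv, B₁_inv]
  simp only [← h₀₀, ← h₀₁, ← h₁₀, ← h₁₁]
  abel_nf
  simp only [M]
  simp only [neg_mul, one_mul, mul_inv_cancel_of_invertible, Int.cast_one, add_assoc, add_comm,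
    add_left_comm, one_smul, Int.cast_neg, neg_smul, Int.cast_ofNat]
  simp only [← add_assoc, ← add_smul]
  grind

/-- Tsirelson's inequality: for Hermitian operators A₁, A₂, B₁, B₂ squaring to the
identity, with every Aᵢ commuting with every Bⱼ, the CHSH expectation in any unit
state is bounded by 2√2. -/
theorem tsirelson_inequality_matrix
    {n : ℕ} (A₁ A₂ B₁ B₂ : Matrix (Fin n) (Fin n) ℂ)
    (hA₁ : A₁.IsHermitian) (hA₂ : A₂.IsHermitian)
    (hB₁ : B₁.IsHermitian) (hB₂ : B₂.IsHermitian)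
    (hA₁sq : A₁ * A₁ = 1) (hA₂sq : A₂ * A₂ = 1)
    (hB₁sq : B₁ * B₁ = 1) (hB₂sq : B₂ * B₂ = 1)
    (hc₁₁ : A₁ * B₁ = B₁ * A₁) (hc₁₂ : A₁ * B₂ = B₂ * A₁)
    (hc₂₁ : A₂ * B₁ = B₁ * A₂) (hc₂₂ : A₂ * B₂ = B₂ * A₂)
    (ψ : Fin n → ℂ) (hψ : ∑ i, starRingEnd ℂ (ψ i) * ψ i = 1) :
    (∑ i, starRingEnd ℂ (ψ i) *
        ((A₁ * B₁ + A₂ * B₁ + A₂ * B₂ - A₁ * B₂).mulVec ψ) i).re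
      ≤ 2 * Real.sqrt 2 := by
  set P : Matrix (Fin n) (Fin n) ℂ := ((√2)⁻¹ : ℝ) • (A₁ + A₂) - B₁ with hP
  set Q : Matrix (Fin n) (Fin n) ℂ := ((√2)⁻¹ : ℝ) • (A₁ - A₂) + B₂ with hQ
  have key := tsirelson_sos A₂ A₁ B₁ B₂ hA₂sq hA₁sq hB₁sq hB₂sq hc₂₁ hc₂₂ hc₁₁ hc₁₂
  rw [← hP, ← hQ] at key
  have hM : A₁ * B₁ + A₂ * B₁ + A₂ * B₂ - A₁ * B₂ =
      (√2 ^ 3 : ℝ) • (1 : Matrix (Fin n) (Fin n) ℂ) - ((√2)⁻¹ : ℝ) • (P ^ 2 + Q ^ 2) := by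
    rw [← key]; abel
  have hPsa : Pᴴ = P := by
    simp [hP, conjTranspose_sub, conjTranspose_smul, conjTranspose_add,
      hA₁.eq, hA₂.eq, hB₁.eq]
  have hQsa : Qᴴ = Q := by
    simp [hQ, conjTranspose_add, conjTranspose_smul, conjTranspose_sub,
      hA₁.eq, hA₂.eq, hB₂.eq]
  have hPpos : 0 ≤ (star ψ ⬝ᵥ (P ^ 2).mulVec ψ).re := by
    open scoped ComplexOrder in
    have := (posSemidef_conjTranspose_mul_self P).re_dotProduct_nonneg ψ
    rwa [hPsa, ← sq, RCLike.re_to_complex] at this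
  have hQpos : 0 ≤ (star ψ ⬝ᵥ (Q ^ 2).mulVec ψ).re := by
    open scoped ComplexOrder in
    have := (posSemidef_conjTranspose_mul_self Q).re_dotProduct_nonneg ψ
    rwa [hQsa, ← sq, RCLike.re_to_complex] at this
  have hψ' : star ψ ⬝ᵥ ψ = 1 := by
    simpa [dotProduct] using hψ
  have hsum : (∑ i, starRingEnd ℂ (ψ i) *
      ((A₁ * B₁ + A₂ * B₁ + A₂ * B₂ - A₁ * B₂).mulVec ψ) i)
      = star ψ ⬝ᵥ (A₁ * B₁ + A₂ * B₁ + A₂ * B₂ - A₁ * B₂).mulVec ψ := by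
    simp [dotProduct]
  rw [hsum, hM]
  have expand : star ψ ⬝ᵥ ((√2 ^ 3 : ℝ) • (1 : Matrix (Fin n) (Fin n) ℂ)
        - ((√2)⁻¹ : ℝ) • (P ^ 2 + Q ^ 2)).mulVec ψ
      = (√2 ^ 3 : ℝ) • (star ψ ⬝ᵥ ψ)
        - ((√2)⁻¹ : ℝ) • (star ψ ⬝ᵥ (P ^ 2).mulVec ψ + star ψ ⬝ᵥ (Q ^ 2).mulVec ψ) := by
    simp [sub_mulVec, add_mulVec, smul_mulVec, one_mulVec, dotProduct_sub,
      dotProduct_add, dotProduct_smul]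
  rw [expand, hψ']
  have h3 : (√2 : ℝ) ^ 3 = 2 * √2 := by
    rw [pow_succ, sq, Real.mul_self_sqrt (by norm_num)]
  have hre : ((√2 ^ 3 : ℝ) • (1 : ℂ)
      - ((√2)⁻¹ : ℝ) • (star ψ ⬝ᵥ (P ^ 2).mulVec ψ + star ψ ⬝ᵥ (Q ^ 2).mulVec ψ)).re
      = √2 ^ 3 - (√2)⁻¹ * ((star ψ ⬝ᵥ (P ^ 2).mulVec ψ).re + (star ψ ⬝ᵥ (Q ^ 2).mulVec ψ).re) := by
    rw [Complex.sub_re, Complex.smul_re, Complex.smul_re, Complex.add_re,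
      ]
    simp [smul_eq_mul]
  rw [hre, h3]
  nlinarith [Real.sqrt_nonneg 2, inv_nonneg.2 (Real.sqrt_nonneg 2), hPpos, hQpos,
    mul_nonneg (inv_nonneg.2 (Real.sqrt_nonneg 2)) (add_nonneg hPpos hQpos)]
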